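/- For every ε > 0 and every p with 1/2 < p < (1+ε)/(2+ε), there exists s₀ such that for all integers s ≥ s₀ and all integers r with (2+ε)s ≤ r ≤ (2+2ε)s, one has B_{r,s}(p) − 2p + 1 < 0. (Such an integer r exists whenever s > 1/ε; consequently the least r for which B_{r,s}(p) − 2p + 1 has a root in (0,1) is at most (2+2ε)s for all sufficiently large s.) -/
import Mathlib


/-- `B r s p = ∑_{i=0}^{s-1} C(r,i) p^{r-i} (1-p)^i`, the probability that a
Binomial(r,p) random variable exceeds `r - s`. -/
noncomputable def B (r s : ℕ) (p : ℝ) : ℝ :=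
  ∑ i ∈ Finset.range s, (r.choose i : ℝ) * p ^ (r - i) * (1 - p) ^ i

/-- Chernoff-type bound: `B r s p ≤ t^(s-1) (p + (1-p)/t)^r` for `t ≥ 1`. -/
lemma B_le_aux (r s : ℕ) (hsr : s ≤ r) (p t : ℝ) (hp0 : 0 ≤ p) (hp1 : p ≤ 1)
    (ht : 1 ≤ t) :
    B r s p ≤ t ^ (s - 1) * (p + (1 - p) / t) ^ r := by
  have ht0 : (0:ℝ) < t := lt_of_lt_of_le one_pos ht
  have hq0 : 0 ≤ (1 - p) / t := div_nonneg (by linarith) ht0.le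
  have step1 : B r s p ≤
      t ^ (s - 1) * ∑ i ∈ Finset.range s,
        ((1 - p) / t) ^ i * p ^ (r - i) * (r.choose i : ℝ) := by
    rw [Finset.mul_sum]
    apply Finset.sum_le_sum
    intro i hi
    have hi' : i ≤ s - 1 := Nat.le_sub_one_of_lt (Finset.mem_range.mp hi)
    have hratio : (1:ℝ) ≤ t ^ (s - 1) / t ^ i := by
      rw [le_div_iff₀ (pow_pos ht0 i), one_mul]
      exact pow_le_pow_right₀ ht hi'
    have hterm : 0 ≤ (r.choose i : ℝ) * p ^ (r - i) * (1 - p) ^ i :=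
      mul_nonneg (mul_nonneg (Nat.cast_nonneg _) (pow_nonneg hp0 _))
        (pow_nonneg (by linarith) _)
    have heq : t ^ (s - 1) * (((1 - p) / t) ^ i * p ^ (r - i) * (r.choose i : ℝ)) =
        (t ^ (s - 1) / t ^ i) * ((r.choose i : ℝ) * p ^ (r - i) * (1 - p) ^ i) := by
      rw [div_pow]; ring
    rw [heq]
    calc (r.choose i : ℝ) * p ^ (r - i) * (1 - p) ^ i
        = 1 * ((r.choose i : ℝ) * p ^ (r - i) * (1 - p) ^ i) := by ring
      _ ≤ (t ^ (s - 1) / t ^ i) * ((r.choose i : ℝ) * p ^ (r - i) * (1 - p) ^ i) :=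
          mul_le_mul_of_nonneg_right hratio hterm
  have step2 : ∑ i ∈ Finset.range s, ((1 - p) / t) ^ i * p ^ (r - i) * (r.choose i : ℝ)
      ≤ ((1 - p) / t + p) ^ r := by
    rw [add_pow]
    apply Finset.sum_le_sum_of_subset_of_nonneg
    · exact Finset.range_subset_range.mpr (by omega)
    · intro i _ _
      exact mul_nonneg (mul_nonneg (pow_nonneg hq0 _) (pow_nonneg hp0 _))
        (Nat.cast_nonneg _)
  have := step1.trans (mul_le_mul_of_nonneg_left step2 (pow_nonneg ht0.le _))
  rwa [add_comm ((1-p)/t) p] at this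

/-- For every `ε > 0` and every `p` with `1/2 < p < (1+ε)/(2+ε)`, there exists `s₀`
such that for all integers `s ≥ s₀` and all integers `r` with
`(2+ε)s ≤ r ≤ (2+2ε)s`, one has `B_{r,s}(p) - 2p + 1 < 0`. -/
theorem stmt_7 (ε : ℝ) (hε : 0 < ε) (p : ℝ) (hp1 : 1 / 2 < p)
    (hp2 : p < (1 + ε) / (2 + ε)) :
    ∃ s₀ : ℕ, ∀ s : ℕ, s₀ ≤ s → ∀ r : ℕ,
      (2 + ε) * s ≤ (r : ℝ) → (r : ℝ) ≤ (2 + 2 * ε) * s →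
      B r s p - 2 * p + 1 < 0 := by
  have hε2 : (0:ℝ) < 2 + ε := by linarith
  have hp1' : p < 1 := by
    have h2 : (1 + ε) / (2 + ε) < 1 := (div_lt_one hε2).mpr (by linarith)
    linarith
  have hp0 : 0 < p := by linarith
  have hq : 0 < 1 - p := by linarith
  -- δ > 0 encodes (2+ε)(1-p) > 1
  set δ : ℝ := (2 + ε) * (1 - p) - 1 with hδdef
  have hδ : 0 < δ := by
    have h2 : p * (2 + ε) < 1 + ε := (lt_div_iff₀ hε2).mp hp2
    simp only [hδdef]; nlinarith
  set t : ℝ := 1 + δ / 2 with htdef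
  have ht1 : 1 < t := by simp only [htdef]; linarith
  have ht0 : (0:ℝ) < t := by linarith
  set u : ℝ := p + (1 - p) / t with hudef
  set x : ℝ := (1 - p) * (δ / 2) / t with hxdef
  have hx0 : 0 < x := by
    apply div_pos (mul_pos hq (by linarith)) ht0
  have hueq : u = 1 - x := by
    simp only [hudef, hxdef, htdef]
    field_simp
    ring
  have hu0 : 0 < u := by
    have : 0 < (1 - p) / t := div_pos hq ht0
    simp only [hudef]; linarith
  have hu1 : u < 1 := by rw [hueq]; linarith
  -- geometric factor c = t * u^(2+ε) < 1
  set c : ℝ := t * u ^ (2 + ε : ℝ) with hcdef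
  have hc0 : 0 < c := mul_pos ht0 (Real.rpow_pos_of_pos hu0 _)
  have hc1 : c < 1 := by
    have h1 : u ≤ Real.exp (-x) := by
      rw [hueq]
      have := Real.add_one_le_exp (-x)
      linarith
    have h2 : u ^ (2 + ε : ℝ) ≤ Real.exp (-x) ^ (2 + ε : ℝ) :=
      Real.rpow_le_rpow hu0.le h1 (by linarith)
    have h3 : Real.exp (-x) ^ (2 + ε : ℝ) = Real.exp (-x * (2 + ε)) :=
      (Real.exp_mul _ _).symm
    have h4 : t ≤ Real.exp (δ / 2) := by
      have := Real.add_one_le_exp (δ / 2)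
      simp only [htdef]; linarith
    have h5 : c ≤ Real.exp (δ / 2) * Real.exp (-x * (2 + ε)) := by
      rw [hcdef]
      apply mul_le_mul h4 (h2.trans_eq h3) (Real.rpow_nonneg hu0.le _)
        (Real.exp_pos _).le
    rw [← Real.exp_add] at h5
    have h6 : δ / 2 + -x * (2 + ε) < 0 := by
      have key : x * (2 + ε) * t = (1 + δ) * (δ / 2) := by
        simp only [hxdef, hδdef]
        field_simp
        ring
      nlinarith [key, hδ, ht0, htdef, sq_nonneg δ]
    calc c ≤ Real.exp (δ / 2 + -x * (2 + ε)) := h5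
      _ < Real.exp 0 := Real.exp_lt_exp.mpr h6
      _ = 1 := Real.exp_zero
  -- choose s₀
  have htend := tendsto_pow_atTop_nhds_zero_of_lt_one hc0.le hc1
  have hev : ∀ᶠ n : ℕ in Filter.atTop, c ^ n < 2 * p - 1 :=
    htend.eventually_lt_const (by linarith : (0:ℝ) < 2 * p - 1)
  obtain ⟨s₁, hs₁⟩ := Filter.eventually_atTop.mp hev
  refine ⟨max s₁ 1, fun s hs r hr1 _ => ?_⟩
  have hs1 : 1 ≤ s := le_trans (le_max_right _ _) hs
  have hss1 : s₁ ≤ s := le_trans (le_max_left _ _) hs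
  have hsr : s ≤ r := by
    have h1 : (s:ℝ) + 1 ≤ (2 + ε) * s := by
      have : (1:ℝ) ≤ (s:ℝ) := by exact_mod_cast hs1
      nlinarith
    have h2 : (s:ℝ) + 1 ≤ (r:ℝ) := h1.trans hr1
    have h3 : (s:ℝ) ≤ (r:ℝ) := by linarith
    exact_mod_cast h3
  -- main chain
  have hB := B_le_aux r s hsr p t hp0.le hp1'.le ht1.le
  have hstep1 : u ^ r ≤ u ^ ((2 + ε) * (s:ℝ) : ℝ) := by
    rw [← Real.rpow_natCast u r]
    exact Real.rpow_le_rpow_of_exponent_ge hu0 hu1.le hr1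
  have hstep2 : u ^ ((2 + ε) * (s:ℝ) : ℝ) = (u ^ (2 + ε : ℝ)) ^ s := by
    rw [Real.rpow_mul hu0.le, Real.rpow_natCast]
  have hstep3 : t ^ (s - 1) ≤ t ^ s := pow_le_pow_right₀ ht1.le (Nat.sub_le s 1)
  have hv0 : 0 ≤ u ^ (2 + ε : ℝ) := Real.rpow_nonneg hu0.le _
  have hchain : B r s p ≤ c ^ s := by
    calc B r s p ≤ t ^ (s - 1) * u ^ r := hB
      _ ≤ t ^ (s - 1) * (u ^ (2 + ε : ℝ)) ^ s := by
          rw [← hstep2]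
          exact mul_le_mul_of_nonneg_left hstep1 (pow_nonneg ht0.le _)
      _ ≤ t ^ s * (u ^ (2 + ε : ℝ)) ^ s :=
          mul_le_mul_of_nonneg_right hstep3 (pow_nonneg hv0 _)
      _ = c ^ s := by rw [hcdef, mul_pow]
  have := hs₁ s hss1
  linarith
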